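/- arXiv:1307.5143 — 3 statements merged into one kernel-verified Lean document; each statement's English description precedes it below -/
import Mathlib

section
/- Let u ∈ H_{[1,n]} be a vector in an n-fold tensor product of finite-dimensional spaces. For any cut position i and integer m, the operation trim^i_m (keeping the m largest Schmidt terms across the cut (i,i+1)) does not increase the Schmidt rank of u across any other cut (j,j+1). -/
/-- Elementary tensor of two vectors, in the function model of a bipartite tensor product. -/
noncomputable def tens {α β : Type*} [Fintype α] [Fintype β]
    (a : EuclideanSpace ℂ α) (b : EuclideanSpace ℂ β) :
    EuclideanSpace ℂ (α × β) := WithLp.toLp 2 (fun x : α × β => a x.1 * b x.2)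

lemma esum_apply {ι α : Type*} [Fintype α] (s : Finset ι) (f : ι → EuclideanSpace ℂ α)
    (x : α) : (∑ i ∈ s, f i) x = ∑ i ∈ s, f i x := by
  classical
  induction s using Finset.induction with
  | empty => rfl
  | @insert x s h ih => rw [Finset.sum_insert h, Finset.sum_insert h, ← ih]; rfl

/-- In the chain `H_1 ⊗ H_2 ⊗ H_3` (modelled by index type
`(Fin p × Fin q) × Fin r`), trimming `u` across the cut between `H_1 ⊗ H_2` and `H_3`
(keeping the `m` largest Schmidt terms `λ_k a_k ⊗ b_k`) does not increase the Schmidt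
rank of `u` across the other cut, between `H_1` and `H_2 ⊗ H_3` (the rank of the
associated matrix with row index `Fin p` and column index `Fin q × Fin r`). -/
theorem trim_not_increase_other_rank
    {p q r N : ℕ} (u : EuclideanSpace ℂ ((Fin p × Fin q) × Fin r))
    (a : Fin N → EuclideanSpace ℂ (Fin p × Fin q)) (b : Fin N → EuclideanSpace ℂ (Fin r))
    (ha : Orthonormal ℂ a) (hb : Orthonormal ℂ b)
    (lam : Fin N → ℝ) (hlam : ∀ j, 0 < lam j)
    (hmono : ∀ j k : Fin N, j ≤ k → lam k ≤ lam j)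
    (hdecomp : u = ∑ j, (lam j : ℂ) • tens (a j) (b j))
    (m : ℕ) :
    (Matrix.of fun (i : Fin p) (yz : Fin q × Fin r) =>
        (∑ j ∈ Finset.univ.filter (fun j : Fin N => (j : ℕ) < m),
          (lam j : ℂ) • tens (a j) (b j)) ((i, yz.1), yz.2)).rank ≤
    (Matrix.of fun (i : Fin p) (yz : Fin q × Fin r) => u ((i, yz.1), yz.2)).rank := by
  classical
  have hborth : ∀ k j : Fin N, (∑ z' : Fin r, (starRingEnd ℂ) (b k z') * b j z')
      = if k = j then 1 else 0 := by
    intro k j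
    have := orthonormal_iff_ite.mp hb k j
    simpa [PiLp.inner_apply, RCLike.inner_apply, mul_comm] using this
  set C : Matrix (Fin q × Fin r) (Fin q × Fin r) ℂ :=
    Matrix.of fun x y => (if x.1 = y.1 then (1 : ℂ) else 0) *
      ∑ k ∈ Finset.univ.filter (fun k : Fin N => (k : ℕ) < m),
        (starRingEnd ℂ) (b k x.2) * b k y.2 with hC
  have key : (Matrix.of fun (i : Fin p) (yz : Fin q × Fin r) =>
        (∑ j ∈ Finset.univ.filter (fun j : Fin N => (j : ℕ) < m),
          (lam j : ℂ) • tens (a j) (b j)) ((i, yz.1), yz.2)) =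
      (Matrix.of fun (i : Fin p) (yz : Fin q × Fin r) => u ((i, yz.1), yz.2)) * C := by
    ext i yz
    obtain ⟨y, z⟩ := yz
    rw [Matrix.mul_apply]
    simp only [Matrix.of_apply, hC, hdecomp, esum_apply, PiLp.smul_apply, smul_eq_mul, tens]
    rw [Fintype.sum_prod_type]
    simp only [mul_ite, mul_one, mul_zero, ite_mul, zero_mul, one_mul,
      Finset.sum_ite_eq', Finset.mem_univ, if_true]
    rw [Finset.sum_comm]
    simp only [Finset.sum_ite_eq', Finset.mem_univ, if_true]
    simp only [Finset.sum_mul, Finset.mul_sum]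
    rw [Finset.sum_comm]
    have step : ∀ j k : Fin N, (∑ z' : Fin r,
        (lam j : ℂ) * (a j (i, y) * b j z') * ((starRingEnd ℂ) (b k z') * b k z))
        = ((lam j : ℂ) * (a j (i, y) * b k z)) * (if k = j then 1 else 0) := by
      intro j k
      rw [← hborth k j, Finset.mul_sum]
      exact Finset.sum_congr rfl fun z' _ => by ring
    refine Finset.sum_congr rfl fun k _ => ?_
    rw [Finset.sum_comm]
    simp only [step, mul_ite, mul_one, mul_zero, Finset.sum_ite_eq, Finset.mem_univ, if_true]
  rw [key]
  exact Matrix.rank_mul_le_left _ C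
end

section
/- Let H be Hermitian with ground energy ε₀, gap ε, and ground state Γ, and suppose ‖H‖ ≤ n and each eigenvalue of H is at least ε₀. Let σ' be a density matrix with Tr(σ' H) ≤ ε₀ + 7√c where 14√c < ε/2. Writing σ' = Σ_j μ_j |v_j⟩⟨v_j| in its spectral decomposition with μ_1 ≥ μ_2 ≥ ..., the set J = { j : ⟨v_j, H v_j⟩ ≤ ε₀ + 14√c } satisfies Σ_{j∈J} μ_j ≥ 1/2, and moreover J contains at most one element; hence μ_1 ≥ 1/2 and the leading eigenvector v_1 satisfies ⟨v_1, H v_1⟩ ≤ ε₀ + 14√c. -/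
lemma overlap_lemma
    {E : Type*} [NormedAddCommGroup E] [InnerProductSpace ℂ E]
    (H : E →ₗ[ℂ] E) (hH : H.IsSymmetric)
    (ε₀ ε : ℝ) (hε : 0 < ε)
    (Γ : E) (hΓ : ‖Γ‖ = 1) (hHΓ : H Γ = (ε₀ : ℂ) • Γ)
    (hgap : ∀ w : E, ‖w‖ = 1 → (inner ℂ w Γ : ℂ) = 0 → ε₀ + ε ≤ (inner ℂ w (H w) : ℂ).re)
    (u : E) (hu : ‖u‖ = 1) (hlow : (inner ℂ u (H u) : ℂ).re < ε₀ + ε / 2) :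
    1 / 2 < ‖(inner ℂ Γ u : ℂ)‖ ^ 2 := by
  set α : ℂ := inner ℂ Γ u with hα
  set w : E := u - α • Γ with hwdef
  have hΓΓ : (inner ℂ Γ Γ : ℂ) = 1 := by
    rw [inner_self_eq_norm_sq_to_K, hΓ]; norm_num
  have hwΓ : (inner ℂ Γ w : ℂ) = 0 := by
    simp [hwdef, inner_sub_right, inner_smul_right, hΓΓ, hΓ, hα]
  have hΓw : (inner ℂ w Γ : ℂ) = 0 := by
    rw [← inner_conj_symm, hwΓ]; simp
  have hudecomp : u = α • Γ + w := by simp [hwdef]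
  have hpyth : ‖α‖ ^ 2 + ‖w‖ ^ 2 = 1 := by
    have h := norm_add_sq_eq_norm_sq_add_norm_sq_of_inner_eq_zero (α • Γ) w
      (by rw [inner_smul_left, hwΓ]; ring)
    rw [← hudecomp, hu, norm_smul, hΓ, mul_one] at h
    linear_combination -h
  -- gap for any w ⊥ Γ
  have hgap' : ∀ z : E, (inner ℂ z Γ : ℂ) = 0 → (ε₀ + ε) * ‖z‖ ^ 2 ≤ (inner ℂ z (H z) : ℂ).re := by
    intro z hz
    rcases eq_or_ne z 0 with rfl | hz0
    · simp
    · have hnz : (0:ℝ) < ‖z‖ := norm_pos_iff.mpr hz0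
      have h1 : ‖(‖z‖⁻¹ : ℂ) • z‖ = 1 := by
        rw [norm_smul]; simp [hnz.ne', norm_inv]
      have h2 : (inner ℂ ((‖z‖⁻¹ : ℂ) • z) Γ : ℂ) = 0 := by
        rw [inner_smul_left, hz]; ring
      have := hgap _ h1 h2
      rw [map_smul, inner_smul_left, inner_smul_right] at this
      have hre : ((starRingEnd ℂ) ((‖z‖:ℂ))⁻¹ * (((‖z‖:ℂ))⁻¹ * inner ℂ z (H z))).re
          = ‖z‖⁻¹ * ‖z‖⁻¹ * (inner ℂ z (H z) : ℂ).re := by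
        rw [← Complex.ofReal_inv, Complex.conj_ofReal, ← mul_assoc, ← Complex.ofReal_mul,
          Complex.re_ofReal_mul]
      rw [hre] at this
      have h5 := mul_le_mul_of_nonneg_right this (by positivity : (0:ℝ) ≤ ‖z‖^2)
      have hzz : ‖z‖⁻¹ * ‖z‖ = 1 := inv_mul_cancel₀ hnz.ne'
      have h6 : ‖z‖⁻¹ * ‖z‖⁻¹ * (inner ℂ z (H z) : ℂ).re * ‖z‖^2
          = (‖z‖⁻¹ * ‖z‖) * (‖z‖⁻¹ * ‖z‖) * (inner ℂ z (H z) : ℂ).re := by ring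
      rw [h6, hzz] at h5
      linarith
  -- energy expansion
  have hexp : (inner ℂ u (H u) : ℂ).re = ‖α‖ ^ 2 * ε₀ + (inner ℂ w (H w) : ℂ).re := by
    have hHw : (inner ℂ (α • Γ) (H w) : ℂ) = 0 := by
      rw [inner_smul_left, ← hH Γ w, hHΓ, inner_smul_left, hwΓ]
      simp
    have hwH : (inner ℂ w (H (α • Γ)) : ℂ) = 0 := by
      rw [map_smul, hHΓ, inner_smul_right, inner_smul_right, hΓw]
      simp
    have hc1 : α * (starRingEnd ℂ) α = ((‖α‖:ℝ):ℂ)^2 := by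
      rw [Complex.mul_conj, Complex.normSq_eq_norm_sq]
      push_cast
      ring
    have hαα : (inner ℂ (α • Γ) (H (α • Γ)) : ℂ) = (‖α‖^2 * ε₀ : ℝ) := by
      rw [map_smul, hHΓ, inner_smul_left, inner_smul_right, inner_smul_right, hΓΓ]
      push_cast
      linear_combination (ε₀:ℂ) * hc1
    conv_lhs => rw [hudecomp]
    rw [map_add, inner_add_left, inner_add_right, inner_add_right, hHw, hwH, hαα]
    rw [add_zero, zero_add, Complex.add_re, Complex.ofReal_re]
  have hb := hgap' w hΓw
  by_contra hcon
  push_neg at hcon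
  have hw2 : 1/2 ≤ ‖w‖^2 := by linarith
  have h3 : ε * (1/2) ≤ ε * ‖w‖^2 := mul_le_mul_of_nonneg_left hw2 hε.le
  have h4 : ε₀ * ‖α‖^2 + ε₀ * ‖w‖^2 = ε₀ := by rw [← mul_add, hpyth, mul_one]
  nlinarith [hb, hexp, hlow, h3, h4]

/-- Let `H` be Hermitian with nondegenerate ground energy `ε₀` (unit ground
state `Γ`), gap `ε`, `‖H‖ ≤ n` and all eigenvalues at least `ε₀`. If a density matrix
`σ' = Σ_j μ_j |v_j⟩⟨v_j|` (spectral decomposition, `μ_1 ≥ μ_2 ≥ ...`) has energy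
`Tr(σ' H) ≤ ε₀ + 7√c` with `14√c < ε/2`, then the set
`J = {j : ⟨v_j, H v_j⟩ ≤ ε₀ + 14√c}` has total weight at least `1/2` and at most one
element; hence `μ_1 ≥ 1/2` and `⟨v_1, H v_1⟩ ≤ ε₀ + 14√c`. -/
theorem leading_eigenvector_low_energy
    {E : Type*} [NormedAddCommGroup E] [InnerProductSpace ℂ E] [FiniteDimensional ℂ E]
    (n : ℝ) (H : E →ₗ[ℂ] E) (hH : H.IsSymmetric)
    (ε₀ ε : ℝ) (hε : 0 < ε)
    (Γ : E) (hΓ : ‖Γ‖ = 1) (hHΓ : H Γ = (ε₀ : ℂ) • Γ)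
    (hgap : ∀ w : E, ‖w‖ = 1 → (inner ℂ w Γ : ℂ) = 0 → ε₀ + ε ≤ (inner ℂ w (H w) : ℂ).re)
    (hground : ∀ x : E, ε₀ * ‖x‖ ^ 2 ≤ (inner ℂ x (H x) : ℂ).re)
    (hHn : ∀ x : E, (inner ℂ x (H x) : ℂ).re ≤ n * ‖x‖ ^ 2)
    (c : ℝ) (hc : 0 < c) (hcε : 14 * Real.sqrt c < ε / 2)
    (N : ℕ) (μ : Fin (N + 1) → ℝ) (hμmono : Antitone μ) (hμ0 : ∀ j, 0 ≤ μ j)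
    (hμsum : ∑ j, μ j = 1)
    (v : Fin (N + 1) → E) (hv : Orthonormal ℂ v)
    (henergy : ∑ j, μ j * (inner ℂ (v j) (H (v j)) : ℂ).re ≤ ε₀ + 7 * Real.sqrt c) :
    (1 / 2 ≤ ∑ j ∈ Finset.univ.filter
        (fun j => (inner ℂ (v j) (H (v j)) : ℂ).re ≤ ε₀ + 14 * Real.sqrt c), μ j) ∧
    (Finset.univ.filter
        (fun j : Fin (N + 1) => (inner ℂ (v j) (H (v j)) : ℂ).re ≤ ε₀ + 14 * Real.sqrt c)).card ≤ 1 ∧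
    1 / 2 ≤ μ 0 ∧ (inner ℂ (v 0) (H (v 0)) : ℂ).re ≤ ε₀ + 14 * Real.sqrt c := by
  set s := Real.sqrt c with hs
  have hspos : 0 < s := Real.sqrt_pos.mpr hc
  set a : Fin (N + 1) → ℝ := fun j => (inner ℂ (v j) (H (v j)) : ℂ).re with ha
  have hvnorm : ∀ j, ‖v j‖ = 1 := fun j => hv.1 j
  have haε₀ : ∀ j, ε₀ ≤ a j := by
    intro j
    have := hground (v j)
    rwa [hvnorm j, one_pow, mul_one] at this
  set J := Finset.univ.filter (fun j : Fin (N + 1) => a j ≤ ε₀ + 14 * s) with hJ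
  -- total "excess energy"
  have hT : ∑ j, μ j * (a j - ε₀) ≤ 7 * s := by
    have : ∑ j, μ j * (a j - ε₀) = (∑ j, μ j * a j) - ε₀ * ∑ j, μ j := by
      rw [Finset.mul_sum, ← Finset.sum_sub_distrib]
      exact Finset.sum_congr rfl (fun j _ => by ring)
    rw [this, hμsum]
    linarith [henergy]
  -- part 1
  have hJc : ∑ j ∈ Finset.univ.filter (fun j => ¬ (a j ≤ ε₀ + 14 * s)), μ j ≤ 1 / 2 := by
    have h1 : 14 * s * ∑ j ∈ Finset.univ.filter (fun j => ¬ (a j ≤ ε₀ + 14 * s)), μ j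
        ≤ ∑ j ∈ Finset.univ.filter (fun j => ¬ (a j ≤ ε₀ + 14 * s)), μ j * (a j - ε₀) := by
      rw [Finset.mul_sum]
      apply Finset.sum_le_sum
      intro j hj
      rw [Finset.mem_filter] at hj
      have : ε₀ + 14 * s < a j := lt_of_not_ge hj.2
      nlinarith [hμ0 j]
    have h2 : ∑ j ∈ Finset.univ.filter (fun j => ¬ (a j ≤ ε₀ + 14 * s)), μ j * (a j - ε₀)
        ≤ ∑ j, μ j * (a j - ε₀) := by
      apply Finset.sum_le_sum_of_subset_of_nonneg (Finset.filter_subset _ _)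
      intro j _ _
      have := haε₀ j
      nlinarith [hμ0 j]
    nlinarith
  have hsplit : (∑ j ∈ J, μ j) + ∑ j ∈ Finset.univ.filter (fun j => ¬ (a j ≤ ε₀ + 14 * s)), μ j = 1 := by
    rw [hJ, Finset.sum_filter_add_sum_filter_not, hμsum]
  have part1 : 1 / 2 ≤ ∑ j ∈ J, μ j := by linarith
  -- part 2 : at most one element
  have hover : ∀ j ∈ J, 1 / 2 < ‖(inner ℂ Γ (v j) : ℂ)‖ ^ 2 := by
    intro j hj
    rw [hJ, Finset.mem_filter] at hj
    exact overlap_lemma H hH ε₀ ε hε Γ hΓ hHΓ hgap (v j) (hvnorm j)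
      (by have := hj.2; simp only [ha] at this ⊢; linarith)
  have part2 : J.card ≤ 1 := by
    rw [Finset.card_le_one]
    intro i hi j hj
    by_contra hij
    have hbessel := hv.sum_inner_products_le Γ (s := {i, j})
    rw [Finset.sum_pair hij, hΓ, one_pow] at hbessel
    have hi' := hover i hi
    have hj' := hover j hj
    rw [norm_inner_symm (𝕜 := ℂ) Γ (v i)] at hi'
    rw [norm_inner_symm (𝕜 := ℂ) Γ (v j)] at hj'
    linarith
  -- J is nonempty
  obtain ⟨j₀, hj₀⟩ : ∃ j, j ∈ J := by
    by_contra h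
    push_neg at h
    have : J = ∅ := Finset.eq_empty_of_forall_notMem h
    rw [this, Finset.sum_empty] at part1
    linarith
  have hJeq : J = {j₀} := by
    apply Finset.eq_singleton_iff_unique_mem.mpr
    refine ⟨hj₀, fun x hx => Finset.card_le_one.mp part2 x hx j₀ hj₀⟩
  have hμj₀ : 1 / 2 ≤ μ j₀ := by
    rw [hJeq, Finset.sum_singleton] at part1
    exact part1
  have hμ0half : 1 / 2 ≤ μ 0 := le_trans hμj₀ (hμmono (Fin.zero_le j₀))
  -- part 4
  have h0 : μ 0 * (a 0 - ε₀) ≤ 7 * s := by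
    have hsingle : μ 0 * (a 0 - ε₀) ≤ ∑ j, μ j * (a j - ε₀) := by
      apply Finset.single_le_sum (f := fun j => μ j * (a j - ε₀))
      · intro j _
        have := haε₀ j
        nlinarith [hμ0 j]
      · exact Finset.mem_univ 0
    linarith
  have part4 : a 0 ≤ ε₀ + 14 * s := by nlinarith [haε₀ 0]
  exact ⟨part1, part2, hμ0half, part4⟩
end

section
/- Let A be a positive semidefinite operator with A Γ = Γ for a unit vector Γ, ‖A‖ = 1, and ⟨w, A w⟩ ≤ η for all unit vectors w orthogonal to Γ. Then for any unit vector v with |⟨v, Γ⟩| ≥ γ > 0 and Av ≠ 0, the normalized vector Av/‖Av‖ satisfies |⟨Av/‖Av‖, Γ⟩| ≥ γ / √(γ² + η). -/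
set_option maxHeartbeats 1600000

/-- Cauchy–Schwarz for the positive semidefinite sesquilinear form `(x, y) ↦ ⟪x, A y⟫`. -/
lemma cs_pos_op {E : Type*} [NormedAddCommGroup E] [InnerProductSpace ℂ E] [CompleteSpace E]
    (A : E →L[ℂ] E) (hA : IsSelfAdjoint A)
    (hpos : ∀ w : E, 0 ≤ (inner ℂ w (A w) : ℂ).re) (x y : E) :
    ‖(inner ℂ x (A y) : ℂ)‖ * ‖(inner ℂ y (A x) : ℂ)‖
      ≤ (inner ℂ x (A x) : ℂ).re * (inner ℂ y (A y) : ℂ).re := by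
  have hsym : ∀ a b : E, (inner ℂ (A a) b : ℂ) = inner ℂ a (A b) := fun a b => hA.isSymmetric a b
  let core : PreInnerProductSpace.Core ℂ E :=
  { inner := fun a b => inner ℂ a (A b)
    conj_inner_symm := fun a b => by
      rw [inner_conj_symm]
      exact hsym a b
    re_inner_nonneg := hpos
    add_left := fun a b c => inner_add_left _ _ _
    smul_left := fun a b r => inner_smul_left _ _ _ }
  exact @InnerProductSpace.Core.inner_mul_inner_self_le ℂ E _ _ _ core x y

/-- Let `A` be a positive semidefinite operator with `AΓ = Γ` (`Γ` a unit
vector), `‖A‖ = 1`, and `⟨w, A w⟩ ≤ η` for all unit vectors `w ⊥ Γ`. Then for a unit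
vector `v` with `|⟨v, Γ⟩| ≥ γ > 0` and `A v ≠ 0`, the normalized image satisfies
`|⟨Av/‖Av‖, Γ⟩| ≥ γ/√(γ² + η)`. -/
theorem agsp_improves_overlap
    {E : Type*} [NormedAddCommGroup E] [InnerProductSpace ℂ E] [FiniteDimensional ℂ E]
    (A : E →L[ℂ] E) (hA : IsSelfAdjoint A)
    (hpos : ∀ w : E, 0 ≤ (inner ℂ w (A w) : ℂ).re)
    (hnorm : ‖A‖ = 1)
    (Γ : E) (hΓ : ‖Γ‖ = 1) (hAΓ : A Γ = Γ)
    (η : ℝ) (hη0 : 0 ≤ η)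
    (hη : ∀ w : E, ‖w‖ = 1 → (inner ℂ w Γ : ℂ) = 0 → (inner ℂ w (A w) : ℂ).re ≤ η)
    (γ : ℝ) (hγ : 0 < γ)
    (v : E) (hv : ‖v‖ = 1) (hvΓ : γ ≤ ‖(inner ℂ v Γ : ℂ)‖) (hAv : A v ≠ 0) :
    γ / Real.sqrt (γ ^ 2 + η) ≤ ‖(inner ℂ ((‖A v‖ : ℂ)⁻¹ • A v) Γ : ℂ)‖ := by
  have hsym : ∀ a b : E, (inner ℂ (A a) b : ℂ) = inner ℂ a (A b) := fun a b => hA.isSymmetric a b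
  set c : ℂ := (inner ℂ Γ v : ℂ) with hc
  set w : E := v - c • Γ with hw
  have hΓΓ : (inner ℂ Γ Γ : ℂ) = 1 := by
    rw [inner_self_eq_norm_sq_to_K, hΓ]; norm_num
  have hΓw : (inner ℂ Γ w : ℂ) = 0 := by
    simp [hw, hc, inner_sub_right, inner_smul_right, hΓΓ, hΓ]
  have hwΓ : (inner ℂ w Γ : ℂ) = 0 := by
    rw [← inner_conj_symm, hΓw, map_zero]
  have hΓAw : (inner ℂ Γ (A w) : ℂ) = 0 := by
    rw [← hsym Γ w, hAΓ, hΓw]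
  have hAwΓ : (inner ℂ (A w) Γ : ℂ) = 0 := by
    rw [← inner_conj_symm, hΓAw, map_zero]
  have hvdec : v = c • Γ + w := by simp [hw]
  have hAvdec : A v = c • Γ + A w := by
    conv_lhs => rw [hvdec]
    rw [map_add, map_smul, hAΓ]
  -- γ ≤ ‖c‖
  have hγc : γ ≤ ‖c‖ := by
    rwa [← inner_conj_symm, RCLike.norm_conj] at hvΓ
  -- Pythagoras for v
  have hpyth_v : 1 = ‖c‖ ^ 2 + ‖w‖ ^ 2 := by
    have h := norm_add_sq_eq_norm_sq_add_norm_sq_of_inner_eq_zero (c • Γ) w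
      (by rw [inner_smul_left, hΓw, mul_zero])
    rw [← hvdec, hv, norm_smul, hΓ] at h
    linear_combination h
  -- Pythagoras for A v
  have hpyth_Av : ‖A v‖ ^ 2 = ‖c‖ ^ 2 + ‖A w‖ ^ 2 := by
    have h := norm_add_sq_eq_norm_sq_add_norm_sq_of_inner_eq_zero (c • Γ) (A w)
      (by rw [inner_smul_left, hΓAw, mul_zero])
    rw [← hAvdec, norm_smul, hΓ] at h
    linear_combination h
  -- ⟨w, A w⟩ ≤ η ‖w‖²
  have hwAw : (inner ℂ w (A w) : ℂ).re ≤ η * ‖w‖ ^ 2 := by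
    rcases eq_or_ne w 0 with h0 | h0
    · simp [h0]
    · have hnw : (0 : ℝ) < ‖w‖ := norm_pos_iff.2 h0
      have hu := hη ((‖w‖ : ℂ)⁻¹ • w) (by
          rw [norm_smul]
          simp [norm_inv, hnw.ne'])
        (by rw [inner_smul_left, hwΓ, mul_zero])
      rw [inner_smul_left, map_smul, inner_smul_right] at hu
      have hconj : (starRingEnd ℂ) ((‖w‖ : ℂ))⁻¹ * ((‖w‖ : ℂ))⁻¹ = (((‖w‖ ^ 2 : ℝ))⁻¹ : ℂ) := by
        rw [← Complex.ofReal_inv, Complex.conj_ofReal, ← Complex.ofReal_mul,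
          ← Complex.ofReal_inv]
        norm_num
        ring
      rw [← mul_assoc, hconj, ← Complex.ofReal_inv, Complex.re_ofReal_mul] at hu
      have h2 := mul_le_mul_of_nonneg_left hu (by positivity : (0:ℝ) ≤ ‖w‖ ^ 2)
      have h3 : ‖w‖ ^ 2 * ((‖w‖ ^ 2)⁻¹ * (inner ℂ w (A w) : ℂ).re) = (inner ℂ w (A w) : ℂ).re := by
        field_simp
      rw [h3] at h2
      linarith
  -- ‖A w‖² ≤ ⟨w, A w⟩ via Cauchy–Schwarz for the form
  have hAw_sq : ‖A w‖ ^ 2 ≤ (inner ℂ w (A w) : ℂ).re := by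
    rcases eq_or_ne (A w) 0 with h0 | h0
    · rw [h0]
      simpa using hpos w
    · have hnAw : (0 : ℝ) < ‖A w‖ := norm_pos_iff.2 h0
      have hcs := cs_pos_op A hA hpos (A w) w
      have e1 : (inner ℂ (A w) (A w) : ℂ) = ((‖A w‖ ^ 2 : ℝ) : ℂ) := by
        rw [inner_self_eq_norm_sq_to_K]; norm_cast
      have e2 : (inner ℂ w (A (A w)) : ℂ) = ((‖A w‖ ^ 2 : ℝ) : ℂ) :=
        (hsym w (A w)).symm.trans e1
      rw [e1, e2] at hcs
      have hnn : ‖((‖A w‖ ^ 2 : ℝ) : ℂ)‖ = ‖A w‖ ^ 2 := by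
        rw [Complex.norm_real, Real.norm_eq_abs, abs_of_nonneg (by positivity)]
      rw [hnn] at hcs
      have hre : (inner ℂ (A w) (A (A w)) : ℂ).re ≤ ‖A w‖ ^ 2 := by
        have h1 : (inner ℂ (A w) (A (A w)) : ℂ).re ≤ ‖(inner ℂ (A w) (A (A w)) : ℂ)‖ := by
          exact Complex.re_le_norm _
        have h2 : ‖(inner ℂ (A w) (A (A w)) : ℂ)‖ ≤ ‖A w‖ * ‖A (A w)‖ := norm_inner_le_norm _ _
        have h3 : ‖A (A w)‖ ≤ ‖A w‖ := by
          calc ‖A (A w)‖ ≤ ‖A‖ * ‖A w‖ := A.le_opNorm _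
            _ = ‖A w‖ := by rw [hnorm, one_mul]
        nlinarith
      nlinarith [hpos w]
  -- conclusion
  have hnAv : (0 : ℝ) < ‖A v‖ := norm_pos_iff.2 hAv
  have hinner : ‖(inner ℂ ((‖A v‖ : ℂ)⁻¹ • A v) Γ : ℂ)‖ = ‖c‖ / ‖A v‖ := by
    rw [inner_smul_left]
    have hAvΓ : (inner ℂ (A v) Γ : ℂ) = (starRingEnd ℂ) c := by
      rw [hAvdec, inner_add_left, inner_smul_left, hΓΓ, hAwΓ, mul_one, add_zero]
    rw [hAvΓ, norm_mul, RCLike.norm_conj, RCLike.norm_conj, norm_inv, Complex.norm_real,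
      Real.norm_eq_abs, abs_of_nonneg (norm_nonneg _), inv_mul_eq_div]
  have hs : (0 : ℝ) < Real.sqrt (γ ^ 2 + η) := Real.sqrt_pos.2 (by positivity)
  rw [hinner, div_le_div_iff₀ hs hnAv]
  have hsq : Real.sqrt (γ ^ 2 + η) ^ 2 = γ ^ 2 + η := Real.sq_sqrt (by positivity)
  have hkey : (γ * ‖A v‖) ^ 2 ≤ (‖c‖ * Real.sqrt (γ ^ 2 + η)) ^ 2 := by
    have hnw2 : ‖w‖ ^ 2 = 1 - ‖c‖ ^ 2 := by linarith
    have hAw2 : ‖A w‖ ^ 2 ≤ η * (1 - ‖c‖ ^ 2) := by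
      rw [← hnw2]; exact hAw_sq.trans hwAw
    have hc1 : ‖c‖ ^ 2 ≤ 1 := by nlinarith [sq_nonneg ‖w‖]
    have hγ2c : γ ^ 2 ≤ ‖c‖ ^ 2 := by nlinarith
    rw [mul_pow, mul_pow, hsq, hpyth_Av]
    have key : ∀ a b : ℝ, γ ^ 2 ≤ a → b ≤ η * (1 - a) → 0 ≤ a →
        γ ^ 2 * (a + b) ≤ a * (γ ^ 2 + η) := by
      intro a b h1 h2 h3
      nlinarith [mul_nonneg hη0 (sub_nonneg.2 h1),
        mul_nonneg (mul_nonneg hη0 (sq_nonneg γ)) h3,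
        mul_le_mul_of_nonneg_left h2 (sq_nonneg γ)]
    exact key _ _ hγ2c hAw2 (sq_nonneg ‖c‖)
  exact le_of_pow_le_pow_left₀ two_ne_zero (by positivity) hkey
end
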